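/- Suppose X = μ₀ + Σₖ λₖ^{1/2} Zₖ φₖ almost surely, where the series converges almost surely in H, {φₖ} is an orthonormal system in H, λₖ > 0 with Σₖ λₖ < ∞, and the real random variables Zₖ are independent and each symmetrically distributed about 0 (Zₖ and −Zₖ have the same distribution). If α ∈ (0, 1/2] and β ∈ (0, 1/2], then for all j ≠ k, E_P[w_P(X)⟨φⱼ, X − μ₀⟩⟨φₖ, X − μ₀⟩] = 0. -/

import Mathlib

open MeasureTheory
open scoped RealInnerProductSpace

/-- `F_P(t; v) = P(‖X − v‖ ≤ t)`. -/
noncomputable def Fpop {H : Type*} [NormedAddCommGroup H] [MeasurableSpace H]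
    (P : Measure H) (t : ℝ) (v : H) : ℝ :=
  (P {x | ‖x - v‖ ≤ t}).toReal

/-- The α-radius `r_P(v) = inf {t ≥ 0 : F_P(t; v) ≥ α}`. -/
noncomputable def rpop {H : Type*} [NormedAddCommGroup H] [MeasurableSpace H]
    (α : ℝ) (P : Measure H) (v : H) : ℝ :=
  sInf {t : ℝ | 0 ≤ t ∧ α ≤ Fpop P t v}

/-- `G_P(t) = P(r_P(X) ≤ t)`. -/
noncomputable def Gpop {H : Type*} [NormedAddCommGroup H] [MeasurableSpace H]
    (α : ℝ) (P : Measure H) (t : ℝ) : ℝ :=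
  (P {x | rpop α P x ≤ t}).toReal

/-- The population weight function `w_P(v) = g(G_P(r_P(v)))`. -/
noncomputable def wpop {H : Type*} [NormedAddCommGroup H] [MeasurableSpace H]
    (g : ℝ → ℝ) (α : ℝ) (P : Measure H) (v : H) : ℝ :=
  g (Gpop α P (rpop α P v))

/-- The population trimmed mean `μ(P) = E_P[w_P(X)X] / E_P[w_P(X)]`. -/
noncomputable def meanPop {H : Type*} [NormedAddCommGroup H] [InnerProductSpace ℝ H]
    [CompleteSpace H] [MeasurableSpace H] (g : ℝ → ℝ) (α : ℝ) (P : Measure H) : H :=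
  (∫ x, wpop g α P x ∂P)⁻¹ • ∫ x, wpop g α P x • x ∂P

/-- The population trimmed covariance operator
`C(P)(h) = E_P[w_P(X)⟨X − μ(P), h⟩(X − μ(P))] / E_P[w_P(X)]`. -/
noncomputable def covPop {H : Type*} [NormedAddCommGroup H] [InnerProductSpace ℝ H]
    [CompleteSpace H] [MeasurableSpace H] (g : ℝ → ℝ) (α : ℝ) (P : Measure H) (h : H) : H :=
  (∫ x, wpop g α P x ∂P)⁻¹ •
    ∫ x, (wpop g α P x * ⟪x - meanPop g α P, h⟫) • (x - meanPop g α P) ∂P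

/-- The tsum of `z i • c i` is a measurable function of `z : ℕ → ℝ`. -/
lemma measurable_tsum_smul {H : Type*} [NormedAddCommGroup H] [NormedSpace ℝ H]
    [CompleteSpace H] [MeasurableSpace H] [BorelSpace H] [SecondCountableTopology H] (c : ℕ → H) :
    Measurable (fun z : ℕ → ℝ => ∑' i, z i • c i) := by
  classical
  set B : Set (ℕ → ℝ) := {z | Summable (fun i => z i • c i)} with hBdef
  have hsum_meas : ∀ t : Finset ℕ, Measurable (fun z : ℕ → ℝ => ∑ i ∈ t, z i • c i) := by
    intro t
    exact Finset.measurable_sum _ (fun i _ => (measurable_pi_apply i).smul_const (c i))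
  have hB : MeasurableSet B := by
    have : B = ⋂ n : ℕ, ⋃ s : Finset ℕ, ⋂ t : Finset ℕ, ⋂ _ : Disjoint t s,
        {z : ℕ → ℝ | ‖∑ i ∈ t, z i • c i‖ < 1 / (n + 1)} := by
      ext z
      simp only [Set.mem_iInter, Set.mem_iUnion, Set.mem_setOf_eq, hBdef]
      constructor
      · intro hz n
        exact summable_iff_vanishing_norm.mp hz (1 / (n + 1)) (by positivity)
      · intro h
        rw [summable_iff_vanishing_norm]
        intro ε hε
        obtain ⟨n, hn⟩ := exists_nat_one_div_lt hε
        obtain ⟨s, hs⟩ := h n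
        exact ⟨s, fun t ht => (hs t ht).trans hn⟩
    rw [this]
    refine MeasurableSet.iInter fun n => MeasurableSet.iUnion fun s =>
      MeasurableSet.iInter fun t => MeasurableSet.iInter fun _ => ?_
    exact measurableSet_lt (hsum_meas t).norm measurable_const
  refine measurable_of_tendsto_metrizable
    (f := fun n => B.indicator (fun z => ∑ i ∈ Finset.range n, z i • c i))
    (fun n => ((hsum_meas (Finset.range n)).indicator hB)) ?_
  rw [tendsto_pi_nhds]
  intro z
  by_cases hz : z ∈ B
  · have h1 : (fun n => B.indicator (fun z => ∑ i ∈ Finset.range n, z i • c i) z)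
        = fun n => ∑ i ∈ Finset.range n, z i • c i := by
      funext n; simp [Set.indicator_of_mem hz]
    rw [h1]
    exact hz.hasSum.tendsto_sum_nat
  · have h1 : (fun n => B.indicator (fun z => ∑ i ∈ Finset.range n, z i • c i) z)
        = fun _ => (0 : H) := by
      funext n; simp [Set.indicator_of_notMem hz]
    rw [h1, tsum_eq_zero_of_not_summable hz]
    exact tendsto_const_nhds

lemma map_flip_eq {Ω : Type*} [MeasurableSpace Ω] (Q : Measure Ω) [IsProbabilityMeasure Q]
    (Z : ℕ → Ω → ℝ) (hZ : ∀ k, Measurable (Z k))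
    (hindep : ProbabilityTheory.iIndepFun Z Q)
    (j : ℕ) (hsym : Measure.map (Z j) Q = Measure.map (fun ω => -Z j ω) Q) :
    Measure.map (fun ω i => Z i ω) Q
      = Measure.map (fun ω i => if i = j then -Z j ω else Z i ω) Q := by
  classical
  set Z' : ℕ → Ω → ℝ := fun i => (if i = j then (fun x : ℝ => -x) else id) ∘ Z i with hZ'def
  have hZ'eq : ∀ i ω, Z' i ω = if i = j then -Z j ω else Z i ω := by
    intro i ω
    by_cases hi : i = j <;> simp [hZ'def, hi]
  have hZ'meas : ∀ i, Measurable (Z' i) := by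
    intro i
    by_cases hi : i = j <;> simp only [hZ'def, hi, if_pos, if_neg, Function.comp]
    · exact (hZ j).neg
    · simpa [hi] using hZ i
  have hindep' : ProbabilityTheory.iIndepFun Z' Q := by
    refine hindep.comp (fun i => if i = j then (fun x : ℝ => -x) else id) ?_
    intro i
    by_cases hi : i = j <;> simp [hi, measurable_neg, measurable_id]
  have hmarg : ∀ (i : ℕ) (t : Set ℝ), MeasurableSet t → Q (Z' i ⁻¹' t) = Q (Z i ⁻¹' t) := by
    intro i t ht
    by_cases hi : i = j
    · subst hi
      have h1 : Z' i = fun ω => -Z i ω := by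
        funext ω; simp [hZ'eq]
      rw [h1, ← Measure.map_apply (f := fun ω => -Z i ω) (hZ i).neg ht, ← hsym, Measure.map_apply (hZ i) ht]
    · have h1 : Z' i = Z i := by funext ω; simp [hZ'eq, hi]
      rw [h1]
  have hζmeas : Measurable (fun ω i => Z i ω) := measurable_pi_lambda _ hZ
  have hζ'meas : Measurable (fun ω i => Z' i ω) := measurable_pi_lambda _ hZ'meas
  have hres : (fun ω i => if i = j then -Z j ω else Z i ω) = fun ω i => Z' i ω := by
    funext ω i; rw [hZ'eq]
  rw [hres]
  haveI : IsProbabilityMeasure (Measure.map (fun ω i => Z i ω) Q) :=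
    Measure.isProbabilityMeasure_map hζmeas.aemeasurable
  haveI : IsProbabilityMeasure (Measure.map (fun ω i => Z' i ω) Q) :=
    Measure.isProbabilityMeasure_map hζ'meas.aemeasurable
  refine MeasureTheory.ext_of_generate_finite
    (squareCylinders fun _ : ℕ => {s : Set ℝ | MeasurableSet s})
    generateFrom_squareCylinders.symm
    (isPiSystem_squareCylinders (fun _ => by
      intro s hs t ht _
      simp only [Set.mem_setOf_eq] at *
      exact hs.inter ht)
      (fun _ => (MeasurableSet.univ : MeasurableSet (Set.univ : Set ℝ)))) ?_ (by simp)
  rintro _ ⟨s, t, ht, rfl⟩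
  simp only [Set.mem_univ_pi, Set.mem_setOf_eq] at ht
  have htpi : MeasurableSet ((s : Set ℕ).pi t) :=
    MeasurableSet.pi s.countable_toSet (fun i _ => ht i)
  rw [Measure.map_apply hζmeas htpi, Measure.map_apply hζ'meas htpi]
  have h1 : (fun ω i => Z i ω) ⁻¹' ((s : Set ℕ).pi t) = ⋂ i ∈ s, Z i ⁻¹' t i := by
    ext ω; simp [Set.mem_pi]
  have h2 : (fun ω i => Z' i ω) ⁻¹' ((s : Set ℕ).pi t) = ⋂ i ∈ s, Z' i ⁻¹' t i := by
    ext ω; simp [Set.mem_pi]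
  rw [h1, h2,
    hindep.measure_inter_preimage_eq_mul s (fun i _ => ht i),
    hindep'.measure_inter_preimage_eq_mul s (fun i _ => ht i)]
  exact (Finset.prod_congr rfl (fun i _ => hmarg i (t i) (ht i))).symm

/-- If `X = μ₀ + Σₖ λₖ^{1/2} Zₖ φₖ` a.s., with `{φₖ}` orthonormal,
`λₖ > 0`, `Σₖ λₖ < ∞`, and the `Zₖ` independent and symmetric about 0, then for `j ≠ k`,
`E_P[w_P(X)⟨φⱼ, X − μ₀⟩⟨φₖ, X − μ₀⟩] = 0`. -/
theorem weighted_cross_moments_vanish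
    {H : Type*} [NormedAddCommGroup H] [InnerProductSpace ℝ H] [CompleteSpace H]
    [SecondCountableTopology H] [MeasurableSpace H] [BorelSpace H]
    {Ω : Type*} [MeasurableSpace Ω] (Q : Measure Ω) [IsProbabilityMeasure Q]
    (X : Ω → H) (hX : Measurable X)
    (Z : ℕ → Ω → ℝ) (hZ : ∀ k, Measurable (Z k))
    (hindep : ProbabilityTheory.iIndepFun Z Q)
    (hsymZ : ∀ k, Measure.map (Z k) Q = Measure.map (fun ω => -Z k ω) Q)
    (φ : ℕ → H) (hφ : Orthonormal ℝ φ)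
    (lam : ℕ → ℝ) (hlam : ∀ k, 0 < lam k) (hlamsum : Summable lam)
    (μ₀ : H)
    (hexp : ∀ᵐ ω ∂Q, HasSum (fun k => (Real.sqrt (lam k) * Z k ω) • φ k) (X ω - μ₀))
    (P : Measure H) (hP : P = Measure.map X Q)
    (α β : ℝ) (hα : 0 < α) (hα' : α ≤ 1 / 2) (hβ : 0 < β) (hβ' : β ≤ 1 / 2)
    (g : ℝ → ℝ)
    (hg_nonneg : ∀ t ∈ Set.Icc (0 : ℝ) 1, 0 ≤ g t)
    (hg_bdd : BddAbove (g '' Set.Icc (0 : ℝ) 1))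
    (hg_mono : AntitoneOn g (Set.Icc (0 : ℝ) 1))
    (hg_pos : ∀ t ∈ Set.Icc (0 : ℝ) 1, t < 1 - β → 0 < g t)
    (hg_zero : ∀ t ∈ Set.Icc (0 : ℝ) 1, 1 - β ≤ t → g t = 0)
    :
    ∀ j k : ℕ, j ≠ k →
      ∫ x, wpop g α P x * (⟪φ j, x - μ₀⟫ * ⟪φ k, x - μ₀⟫) ∂P = 0 := by
  classical
  intro j k hjk
  have hone : ∀ i i' : ℕ, ⟪φ i, φ i'⟫ = if i = i' then 1 else 0 := orthonormal_iff_ite.mp hφ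
  set S : H → H := fun x => x - (2 * ⟪φ j, x - μ₀⟫) • φ j with hSdef
  have hScont : Continuous S := by
    exact continuous_id.sub ((continuous_const.mul
      (continuous_const.inner (continuous_id.sub continuous_const))).smul continuous_const)
  have hSmeas : Measurable S := hScont.measurable
  have hsub : ∀ x : H, S x - μ₀ = (x - μ₀) - (2 * ⟪φ j, x - μ₀⟫) • φ j := by
    intro x; simp only [hSdef]; abel
  have hinnerj : ∀ x : H, ⟪φ j, S x - μ₀⟫ = -⟪φ j, x - μ₀⟫ := by
    intro x
    rw [hsub, inner_sub_right, real_inner_smul_right, hone j j]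
    simp only [eq_self_iff_true, if_true, mul_one]
    ring
  have hinnerk : ∀ x : H, ⟪φ k, S x - μ₀⟫ = ⟪φ k, x - μ₀⟫ := by
    intro x
    rw [hsub, inner_sub_right, real_inner_smul_right, hone k j, if_neg (Ne.symm hjk)]
    ring
  have hSS : ∀ x, S (S x) = x := by
    intro x
    have h1 : S (S x) = S x - (2 * ⟪φ j, S x - μ₀⟫) • φ j := rfl
    rw [h1, hinnerj x]
    simp only [hSdef]
    have h2 : (2 * -⟪φ j, x - μ₀⟫) • φ j = -((2 * ⟪φ j, x - μ₀⟫) • φ j) := by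
      rw [← neg_smul]; congr 1; ring
    rw [h2]
    abel
  have hiso : ∀ x v : H, ‖S x - S v‖ = ‖x - v‖ := by
    intro x v
    have hab : ⟪φ j, x - μ₀⟫ - ⟪φ j, v - μ₀⟫ = ⟪φ j, x - v⟫ := by
      rw [← inner_sub_right]
      congr 1
      abel
    have h1 : S x - S v = (x - v) - (2 * ⟪φ j, x - v⟫) • φ j := by
      simp only [hSdef]
      rw [← hab, mul_sub, sub_smul]
      abel
    have hn : ‖φ j‖ = 1 := hφ.1 j
    have h2 : ‖S x - S v‖ ^ 2 = ‖x - v‖ ^ 2 := by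
      rw [h1, norm_sub_sq_real, real_inner_smul_right, norm_smul, hn, mul_one,
        Real.norm_eq_abs, sq_abs, real_inner_comm]
      ring
    have h3 := congrArg Real.sqrt h2
    rwa [Real.sqrt_sq (norm_nonneg _), Real.sqrt_sq (norm_nonneg _)] at h3
  -- the series representation
  set c : ℕ → H := fun i => Real.sqrt (lam i) • φ i with hcdef
  set F : (ℕ → ℝ) → H := fun z => ∑' i, z i • c i with hFdef
  have hF : Measurable F := measurable_tsum_smul c
  have hterm : ∀ (ω : Ω) (i : ℕ), Z i ω • c i = (Real.sqrt (lam i) * Z i ω) • φ i := by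
    intro ω i; simp only [hcdef]; rw [smul_smul, mul_comm]
  have hXrepr : ∀ᵐ ω ∂Q, HasSum (fun i => Z i ω • c i) (X ω - μ₀) := by
    filter_upwards [hexp] with ω h
    simpa only [hterm] using h
  have hip : ∀ᵐ ω ∂Q, ⟪φ j, X ω - μ₀⟫ = Real.sqrt (lam j) * Z j ω := by
    filter_upwards [hXrepr] with ω h
    have h2 : HasSum (fun i => Z i ω * ⟪φ j, c i⟫) ⟪φ j, X ω - μ₀⟫ := by
      simpa using h.mapL (innerSL ℝ (φ j))
    have h3 : (fun i => Z i ω * ⟪φ j, c i⟫)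
        = fun i => if i = j then Real.sqrt (lam j) * Z j ω else 0 := by
      funext i
      simp only [hcdef, real_inner_smul_right, hone j i]
      by_cases hi : i = j
      · subst hi; simp; ring
      · simp [hi, Ne.symm hi]
    rw [h3] at h2
    exact (h2.unique (hasSum_ite_eq j _))
  set ζ : Ω → ℕ → ℝ := fun ω i => Z i ω with hζdef
  set ζ' : Ω → ℕ → ℝ := fun ω i => if i = j then -Z j ω else Z i ω with hζ'def
  have hζm : Measurable ζ := measurable_pi_lambda _ hZ
  have hζ'm : Measurable ζ' := by
    refine measurable_pi_lambda _ (fun i => ?_)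
    by_cases hi : i = j <;> simp only [hζ'def, hi, if_pos, if_neg]
    · exact (hZ j).neg
    · simp only [hi, if_false]
      exact hZ i
  have hXae : X =ᵐ[Q] fun ω => μ₀ + F (ζ ω) := by
    filter_upwards [hXrepr] with ω h
    have h1 : F (ζ ω) = X ω - μ₀ := h.tsum_eq
    rw [h1]
    abel
  have hSX : (fun ω => S (X ω)) =ᵐ[Q] fun ω => μ₀ + F (ζ' ω) := by
    filter_upwards [hXrepr, hip] with ω h hj
    have h3 : (fun i => ζ' ω i • c i)
        = fun i => Z i ω • c i + (if i = j then (-2 * Z j ω) • c j else 0) := by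
      funext i
      by_cases hi : i = j
      · subst hi
        simp only [hζ'def, eq_self_iff_true, if_true]
        rw [← add_smul]
        congr 1
        ring
      · simp [hζ'def, hi]
    have h4 : HasSum (fun i => ζ' ω i • c i) ((X ω - μ₀) + (-2 * Z j ω) • c j) := by
      rw [h3]; exact h.add (hasSum_ite_eq j _)
    have h5 : F (ζ' ω) = (X ω - μ₀) + (-2 * Z j ω) • c j := h4.tsum_eq
    have h6 : S (X ω) = X ω - (2 * ⟪φ j, X ω - μ₀⟫) • φ j := rfl
    rw [h5, h6, hj]
    have h7 : (-2 * Z j ω) • c j = -((2 * (Real.sqrt (lam j) * Z j ω)) • φ j) := by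
      simp only [hcdef]
      rw [smul_smul, ← neg_smul]
      congr 1
      ring
    rw [h7]
    abel
  have hlaw := map_flip_eq Q Z hZ hindep j (hsymZ j)
  have hmapS : Measure.map S P = P := by
    rw [hP]
    calc Measure.map S (Measure.map X Q) = Measure.map (S ∘ X) Q := Measure.map_map hSmeas hX
      _ = Measure.map (fun ω => μ₀ + F (ζ' ω)) Q := Measure.map_congr hSX
      _ = Measure.map ((fun z => μ₀ + F z) ∘ ζ') Q := rfl
      _ = Measure.map (fun z => μ₀ + F z) (Measure.map ζ' Q) :=
          (Measure.map_map (measurable_const.add hF) hζ'm).symm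
      _ = Measure.map (fun z => μ₀ + F z) (Measure.map ζ Q) := by rw [← hlaw]
      _ = Measure.map ((fun z => μ₀ + F z) ∘ ζ) Q := Measure.map_map (measurable_const.add hF) hζm
      _ = Measure.map X Q := Measure.map_congr hXae.symm
  have hFpop : ∀ (t : ℝ) (v : H), Fpop P t (S v) = Fpop P t v := by
    intro t v
    unfold Fpop
    have hms : MeasurableSet {x : H | ‖x - S v‖ ≤ t} :=
      measurableSet_le ((continuous_id.sub continuous_const).norm.measurable) measurable_const
    conv_lhs => rw [← hmapS]
    rw [Measure.map_apply hSmeas hms]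
    congr 2
    ext x
    simp only [Set.mem_preimage, Set.mem_setOf_eq]
    rw [hiso x v]
  have hrpop : ∀ v, rpop α P (S v) = rpop α P v := by
    intro v
    unfold rpop
    congr 1
    ext t
    simp only [Set.mem_setOf_eq, hFpop]
  have hwpop : ∀ v, wpop g α P (S v) = wpop g α P v := by
    intro v
    unfold wpop
    rw [hrpop]
  set f : H → ℝ := fun x => wpop g α P x * (⟪φ j, x - μ₀⟫ * ⟪φ k, x - μ₀⟫) with hfd
  let e : H ≃ᵐ H :=
    { toEquiv := ⟨S, S, hSS, hSS⟩
      measurable_toFun := hSmeas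
      measurable_invFun := hSmeas }
  have key : ∫ x, f x ∂P = ∫ x, f (S x) ∂P := by
    have h := MeasureTheory.integral_map_equiv (μ := P) e f
    have h2 : Measure.map (⇑e) P = Measure.map S P := rfl
    rw [h2, hmapS] at h
    exact h
  have hneg : ∀ x, f (S x) = - f x := by
    intro x
    simp only [hfd]
    rw [hwpop, hinnerj, hinnerk]
    ring
  have hfin : ∫ x, f x ∂P = - ∫ x, f x ∂P := by
    conv_lhs => rw [key]
    simp only [hneg]
    exact integral_neg f
  have : ∫ x, f x ∂P = 0 := by linarith
  exact this
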